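/- Let μ be ergodic with positive entropy and suppose ν satisfies the very weak specification property with gap function g(n) = o(n): for every pair of n-strings ω, ξ there exists x ∈ χ^ℕ with x_0^{n−1} = ω and x_{n+g(n)}^{2n+g(n)−1} = ξ (realizable under ν). Then T_n^{(2)}/n → 1 as n → ∞, μ × ν-almost everywhere. -/

import Mathlib

open MeasureTheory Filter
open scoped ENNReal

/-- Cylinder set of a `k`-string. -/
def cyl {χ : Type*} {k : ℕ} (ω : Fin k → χ) : Set (ℕ → χ) := {x | ∀ i : Fin k, x (i : ℕ) = ω i}

/-- The `k`-divergence between `μ` and `ν`. -/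
noncomputable def div2 {χ : Type*} [MeasurableSpace χ] (μ ν : Measure (ℕ → χ)) (k : ℕ) : ℝ≥0∞ :=
  ∑' ω : Fin k → χ, μ (cyl ω) * ν (cyl ω)

/-- The shortest-path function `T_n^{(2)}(x,y)`: the least `m ≥ 1` such that the cylinders
`[y_0^{n-1}]` and `σ^{-m}[x_0^{n-1}]` intersect. -/
noncomputable def T2 {χ : Type*} (n : ℕ) (x y : ℕ → χ) : ℕ :=
  sInf {m | 1 ≤ m ∧ ∃ z : ℕ → χ, (∀ i < n, z i = y i) ∧ (∀ i < n, z (m + i) = x i)}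

/-- `R_n^{(2)}(i)`: pairs `(x,y)` such that the last `i` symbols of `y_0^{n-1}`
equal the first `i` symbols of `x_0^{n-1}`. -/
def R2 {χ : Type*} (n i : ℕ) : Set ((ℕ → χ) × (ℕ → χ)) :=
  {p | ∀ j < i, p.2 (n - i + j) = p.1 j}

/-- Complete grammar: every finite string has positive measure. -/
def CompleteGrammar {χ : Type*} [MeasurableSpace χ] (ν : Measure (ℕ → χ)) : Prop :=
  ∀ (k : ℕ) (ω : Fin k → χ), 0 < ν (cyl ω)

/-- The left shift on `χ^ℕ`. -/
def shift {χ : Type*} (x : ℕ → χ) : ℕ → χ := fun n => x (n + 1)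

/-- `μ` is ergodic with positive entropy `h`, expressed through the
Shannon–McMillan–Breiman theorem. -/
def PositiveEntropySMB {χ : Type*} [MeasurableSpace χ] (μ : Measure (ℕ → χ)) (h : ℝ) : Prop :=
  0 < h ∧ ∀ᵐ x ∂μ, Filter.Tendsto
    (fun n : ℕ => -(1 / (n : ℝ)) * Real.log (μ (cyl (fun i : Fin n => x (i : ℕ)))).toReal)
    Filter.atTop (nhds h)

/-- The very weak specification property for `ν`, with gap function `g`:
any two `n`-strings can be realized (with positive `ν`-probability) in a single
sequence with a gap of `g n` between them. -/
def VWSP {χ : Type*} [MeasurableSpace χ] (ν : Measure (ℕ → χ)) (g : ℕ → ℕ) : Prop :=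
  Filter.Tendsto (fun n : ℕ => (g n : ℝ) / n) Filter.atTop (nhds 0) ∧
    ∀ (n : ℕ) (ω ξ : Fin n → χ),
      0 < ν {x : ℕ → χ | (∀ i : Fin n, x (i : ℕ) = ω i) ∧
        (∀ i : Fin n, x (n + g n + (i : ℕ)) = ξ i)}

/-! ### Auxiliary: quotient by measurable indistinguishability -/

section Quot

variable {χ : Type*} [MeasurableSpace χ]

/-- Two points are measurably indistinguishable if no measurable set separates them. -/
def mSetoid (χ : Type*) [MeasurableSpace χ] : Setoid χ :=
  ⟨fun a b => ∀ s : Set χ, MeasurableSet s → (a ∈ s ↔ b ∈ s),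
    ⟨fun _ _ _ => Iff.rfl, fun h s hs => (h s hs).symm,
     fun h1 h2 s hs => (h1 s hs).trans (h2 s hs)⟩⟩

lemma mrel_of_eq {a b : χ}
    (hab : (Quotient.mk'' a : Quotient (mSetoid χ)) = Quotient.mk'' b) :
    ∀ s : Set χ, MeasurableSet s → (a ∈ s ↔ b ∈ s) :=
  Quotient.exact' hab

variable [Countable χ]

lemma measurableSet_class (q : Quotient (mSetoid χ)) :
    MeasurableSet ((Quotient.mk'' : χ → Quotient (mSetoid χ)) ⁻¹' {q}) := by
  classical
  induction q using Quotient.inductionOn' with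
  | h c0 =>
    have hsep : ∀ c : {c : χ // ¬ (Quotient.mk'' c : Quotient (mSetoid χ)) = Quotient.mk'' c0},
        ∃ B : Set χ, MeasurableSet B ∧ c0 ∈ B ∧ (c : χ) ∉ B := by
      rintro ⟨c, hc⟩
      have h1 : ¬ ∀ s : Set χ, MeasurableSet s → (c ∈ s ↔ c0 ∈ s) :=
        fun hr => hc (Quotient.sound' hr)
      push_neg at h1
      obtain ⟨s, hs, hiff⟩ := h1
      by_cases hc0 : c0 ∈ s
      · refine ⟨s, hs, hc0, fun hcs => ?_⟩
        rcases hiff with ⟨_, h2⟩ | ⟨h1, _⟩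
        · exact h2 hc0
        · exact h1 hcs
      · refine ⟨sᶜ, hs.compl, hc0, fun hcs => ?_⟩
        rcases hiff with ⟨h1, _⟩ | ⟨_, h2⟩
        · exact hcs h1
        · exact hc0 h2
    choose B hBmeas hBc0 hBnot using hsep
    have hset : (Quotient.mk'' : χ → Quotient (mSetoid χ)) ⁻¹' {Quotient.mk'' c0}
        = ⋂ t : {c : χ // ¬ (Quotient.mk'' c : Quotient (mSetoid χ)) = Quotient.mk'' c0}, B t := by
      ext c
      simp only [Set.mem_preimage, Set.mem_singleton_iff, Set.mem_iInter]
      constructor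
      · intro hc t
        exact (mrel_of_eq hc (B t) (hBmeas t)).mpr (hBc0 t)
      · intro hc
        by_contra hne
        exact hBnot ⟨c, hne⟩ (hc ⟨c, hne⟩)
    rw [hset]
    exact MeasurableSet.iInter fun t => hBmeas t

lemma msc : MeasurableSingletonClass (Quotient (mSetoid χ)) :=
  ⟨fun q => measurableSet_quotient.mpr (measurableSet_class q)⟩

lemma exists_qset {B : Set χ} (hB : MeasurableSet B) :
    ∃ B' : Set (Quotient (mSetoid χ)), MeasurableSet B' ∧ Quotient.mk'' ⁻¹' B' = B := by
  refine ⟨Quotient.mk'' '' B, ?_, ?_⟩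
  · rw [measurableSet_quotient]
    have : (Quotient.mk'' : χ → Quotient (mSetoid χ)) ⁻¹' (Quotient.mk'' '' B) = B := by
      ext c
      constructor
      · rintro ⟨b, hbB, hb⟩
        exact (mrel_of_eq hb B hB).mp hbB
      · intro hc; exact ⟨c, hc, rfl⟩
    rw [this]; exact hB
  · ext c
    constructor
    · rintro ⟨b, hbB, hb⟩
      exact (mrel_of_eq hb B hB).mp hbB
    · intro hc; exact ⟨c, hc, rfl⟩

/-- The induced map on sequence spaces. -/
def Fq : (ℕ → χ) → (ℕ → Quotient (mSetoid χ)) := fun x i => Quotient.mk'' (x i)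

lemma measurable_Fq : Measurable (Fq (χ := χ)) :=
  measurable_pi_lambda _ fun i => measurable_quotient_mk''.comp (measurable_pi_apply i)

lemma exists_qset_pi {E : Set (ℕ → χ)} (hE : MeasurableSet E) :
    ∃ E' : Set (ℕ → Quotient (mSetoid χ)), MeasurableSet E' ∧ Fq ⁻¹' E' = E := by
  have hle : (inferInstance : MeasurableSpace (ℕ → χ))
      ≤ MeasurableSpace.comap (Fq (χ := χ)) inferInstance := by
    refine iSup_le fun i => ?_
    rintro s ⟨B, hB, rfl⟩
    obtain ⟨B', hB', hBB⟩ := exists_qset hB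
    refine ⟨(fun u : ℕ → Quotient (mSetoid χ) => u i) ⁻¹' B',
      (measurable_pi_apply i) hB', ?_⟩
    rw [← hBB]; rfl
  exact MeasurableSpace.measurableSet_comap.mp (hle E hE)

lemma measurableSet_cyl {Y : Type*} [MeasurableSpace Y] [MeasurableSingletonClass Y]
    {k : ℕ} (a : Fin k → Y) : MeasurableSet (cyl a) := by
  have : cyl a = ⋂ i : Fin k, (fun u : ℕ → Y => u (i : ℕ)) ⁻¹' {a i} := by
    ext u; simp [cyl]
  rw [this]
  exact MeasurableSet.iInter fun i => (measurable_pi_apply _) (measurableSet_singleton _)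

/-- The key identity: the outer measure of a cylinder equals the measure of the
corresponding cylinder in the quotient sequence space. -/
lemma map_cyl (μ : Measure (ℕ → χ)) {k : ℕ} (ω : Fin k → χ) :
    (μ.map Fq) (cyl fun i : Fin k => (Quotient.mk'' (ω i) : Quotient (mSetoid χ)))
      = μ (cyl ω) := by
  haveI := msc (χ := χ)
  rw [Measure.map_apply measurable_Fq (measurableSet_cyl _)]
  refine le_antisymm ?_ (measure_mono fun x hx i => congrArg _ (hx i))
  obtain ⟨E, hsub, hEm, hμE⟩ := exists_measurable_superset μ (cyl ω)
  obtain ⟨E', hE'm, hEE⟩ := exists_qset_pi hEm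
  have hXs : Fq ⁻¹' (cyl fun i : Fin k => (Quotient.mk'' (ω i) : Quotient (mSetoid χ))) ⊆ E := by
    intro x hx
    set x' : ℕ → χ := fun j => if h : j < k then ω ⟨j, h⟩ else x j with hx'
    have hx'cyl : x' ∈ cyl ω := by
      intro i
      simp only [hx', dif_pos i.isLt]
    have hFx : Fq x' = Fq x := by
      funext j
      simp only [Fq, hx']
      split
      · rename_i hj
        exact (hx ⟨j, hj⟩).symm
      · rfl
    have hx'E : x' ∈ E := hsub hx'cyl
    rw [← hEE] at hx'E ⊢
    simpa [Set.mem_preimage, hFx] using hx'E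
  calc μ (Fq ⁻¹' (cyl fun i : Fin k => (Quotient.mk'' (ω i) : Quotient (mSetoid χ))))
      ≤ μ E := measure_mono hXs
    _ = μ (cyl ω) := hμE

end Quot

/-! ### The Borel–Cantelli part in the quotient space -/

lemma lowerAux {Y : Type*} [MeasurableSpace Y] [Countable Y] [MeasurableSingletonClass Y]
    (μ' ν' : Measure (ℕ → Y)) [IsProbabilityMeasure μ'] [IsProbabilityMeasure ν']
    (θ : ℝ≥0∞) (hθ1 : θ < 1) (K : ℕ) (hK : 1 ≤ K) :
    ∃ C : ℕ → Set ((ℕ → Y) × (ℕ → Y)),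
      (∀ n, MeasurableSet (C n)) ∧ (μ'.prod ν') (Filter.limsup C atTop) = 0 ∧
      ∀ (n i : ℕ) (q : (ℕ → Y) × (ℕ → Y)), n / K + 1 ≤ i →
        μ' (cyl fun j : Fin i => q.1 (j : ℕ)) ≤ θ ^ i →
        (∀ j < i, q.2 (n - i + j) = q.1 j) → q ∈ C n := by
  classical
  set Ys : ℕ → (i : ℕ) → (Fin i → Y) → Set (ℕ → Y) :=
    fun n i a => {v | ∀ j : Fin i, v (n - i + (j : ℕ)) = a j} with hYsdef
  have hYsm : ∀ n i (a : Fin i → Y), MeasurableSet (Ys n i a) := by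
    intro n i a
    have : Ys n i a = ⋂ j : Fin i, (fun v : ℕ → Y => v (n - i + (j : ℕ))) ⁻¹' {a j} := by
      ext v; simp [hYsdef]
    rw [this]
    exact MeasurableSet.iInter fun j => (measurable_pi_apply _) (measurableSet_singleton _)
  set layer : ℕ → ℕ → Set ((ℕ → Y) × (ℕ → Y)) :=
    fun n i => ⋃ a : {a : Fin i → Y // μ' (cyl a) ≤ θ ^ i},
      (cyl (a : Fin i → Y)) ×ˢ Ys n i (a : Fin i → Y) with hlayerdef
  have hlayerm : ∀ n i, MeasurableSet (layer n i) :=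
    fun n i => MeasurableSet.iUnion fun a => (measurableSet_cyl _).prod (hYsm n i _)
  have hYs_disj : ∀ n i, Pairwise (Function.onFun Disjoint fun a : Fin i → Y => Ys n i a) := by
    intro n i a b hab
    refine Set.disjoint_left.mpr fun v hva hvb => hab ?_
    funext j
    rw [← hva j, ← hvb j]
  have hYs_union : ∀ n i, (⋃ a : Fin i → Y, Ys n i a) = Set.univ := by
    intro n i
    ext v
    simp only [Set.mem_iUnion, Set.mem_univ, iff_true]
    exact ⟨fun j => v (n - i + (j : ℕ)), fun j => rfl⟩
  have hlayer : ∀ n i, (μ'.prod ν') (layer n i) ≤ θ ^ i := by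
    intro n i
    calc (μ'.prod ν') (layer n i)
        ≤ ∑' a : {a : Fin i → Y // μ' (cyl a) ≤ θ ^ i},
            (μ'.prod ν') ((cyl (a : Fin i → Y)) ×ˢ Ys n i (a : Fin i → Y)) :=
          measure_iUnion_le _
      _ = ∑' a : {a : Fin i → Y // μ' (cyl a) ≤ θ ^ i},
            μ' (cyl (a : Fin i → Y)) * ν' (Ys n i (a : Fin i → Y)) := by
          refine tsum_congr fun a => ?_
          rw [Measure.prod_prod]
      _ ≤ ∑' a : {a : Fin i → Y // μ' (cyl a) ≤ θ ^ i},
            θ ^ i * ν' (Ys n i (a : Fin i → Y)) :=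
          ENNReal.tsum_le_tsum fun a => mul_le_mul_left a.2 _
      _ = θ ^ i * ∑' a : {a : Fin i → Y // μ' (cyl a) ≤ θ ^ i},
            ν' (Ys n i (a : Fin i → Y)) := ENNReal.tsum_mul_left
      _ ≤ θ ^ i * ∑' a : Fin i → Y, ν' (Ys n i a) :=
          mul_le_mul_right
            (ENNReal.tsum_comp_le_tsum_of_injective Subtype.val_injective
              fun a => ν' (Ys n i a)) _
      _ = θ ^ i * ν' Set.univ := by
          rw [← measure_iUnion (hYs_disj n i) (hYsm n i), hYs_union]
      _ = θ ^ i := by simp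
  set C : ℕ → Set ((ℕ → Y) × (ℕ → Y)) := fun n => ⋃ j : ℕ, layer n (n / K + 1 + j) with hCdef
  have hCm : ∀ n, MeasurableSet (C n) := fun n => MeasurableSet.iUnion fun j => hlayerm _ _
  have h1θ : (1 - θ)⁻¹ ≠ ⊤ := ENNReal.inv_ne_top.mpr (tsub_pos_of_lt hθ1).ne'
  have hCb : ∀ n, (μ'.prod ν') (C n) ≤ θ ^ (n / K) * (1 - θ)⁻¹ := by
    intro n
    calc (μ'.prod ν') (C n) ≤ ∑' j : ℕ, (μ'.prod ν') (layer n (n / K + 1 + j)) :=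
          measure_iUnion_le _
      _ ≤ ∑' j : ℕ, θ ^ (n / K + 1 + j) := ENNReal.tsum_le_tsum fun j => hlayer _ _
      _ = ∑' j : ℕ, θ ^ (n / K) * (θ * θ ^ j) := by
          refine tsum_congr fun j => ?_
          rw [pow_add, pow_add, pow_one]
          ring
      _ = θ ^ (n / K) * (θ * ∑' j : ℕ, θ ^ j) := by
          rw [ENNReal.tsum_mul_left, ENNReal.tsum_mul_left]
      _ ≤ θ ^ (n / K) * (1 * (1 - θ)⁻¹) := by
          rw [ENNReal.tsum_geometric]
          exact mul_le_mul_right (mul_le_mul_left hθ1.le _) _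
      _ = θ ^ (n / K) * (1 - θ)⁻¹ := by rw [one_mul]
  haveI : NeZero K := ⟨by omega⟩
  have hdm : ∑' n : ℕ, θ ^ (n / K) = (K : ℝ≥0∞) * (1 - θ)⁻¹ := by
    have he := Equiv.tsum_eq (Nat.divModEquiv K).symm (fun n : ℕ => θ ^ (n / K))
    rw [← he]
    have hval : ∀ p : ℕ × Fin K, ((Nat.divModEquiv K).symm p) / K = p.1 := by
      rintro ⟨j, r⟩
      simp only [Nat.divModEquiv_symm_apply]
      rw [add_comm, Nat.add_mul_div_right _ _ (by omega : 0 < K),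
        Nat.div_eq_of_lt r.isLt, Nat.zero_add]
    calc ∑' p : ℕ × Fin K, θ ^ (((Nat.divModEquiv K).symm p) / K)
        = ∑' p : ℕ × Fin K, θ ^ p.1 := by
          refine tsum_congr fun p => ?_; rw [hval p]
      _ = ∑' j : ℕ, ∑' _r : Fin K, θ ^ j := ENNReal.tsum_prod (f := fun j (_ : Fin K) => θ ^ j)
      _ = ∑' j : ℕ, (K : ℝ≥0∞) * θ ^ j := by
          refine tsum_congr fun j => ?_
          rw [tsum_fintype]
          simp [Finset.sum_const, nsmul_eq_mul]
      _ = (K : ℝ≥0∞) * (1 - θ)⁻¹ := by rw [ENNReal.tsum_mul_left, ENNReal.tsum_geometric]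
  have hsum : ∑' n : ℕ, (μ'.prod ν') (C n) ≠ ⊤ := by
    refine ne_top_of_le_ne_top ?_ (ENNReal.tsum_le_tsum hCb)
    rw [ENNReal.tsum_mul_right, hdm]
    exact ENNReal.mul_ne_top (ENNReal.mul_ne_top (by simp) h1θ) h1θ
  refine ⟨C, hCm, measure_limsup_atTop_eq_zero hsum, ?_⟩
  intro n i q hi hμ hover
  have : q ∈ layer n i := by
    refine Set.mem_iUnion.mpr ⟨⟨fun j => q.1 (j : ℕ), hμ⟩, ?_⟩
    exact ⟨fun j => rfl, fun j => hover (j : ℕ) j.isLt⟩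
  refine Set.mem_iUnion.mpr ⟨i - (n / K + 1), ?_⟩
  have : n / K + 1 + (i - (n / K + 1)) = i := by omega
  rw [this]
  exact ‹q ∈ layer n i›

theorem T2_concentration {χ : Type*} [MeasurableSpace χ] [Countable χ] [Nonempty χ]
    (μ ν : Measure (ℕ → χ)) [IsProbabilityMeasure μ] [IsProbabilityMeasure ν]
    (hμshift : MeasurePreserving (shift (χ := χ)) μ μ)
    (hνshift : MeasurePreserving (shift (χ := χ)) ν ν)
    (hμerg : Ergodic (shift (χ := χ)) μ)
    (h : ℝ) (hent : PositiveEntropySMB μ h)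
    (g : ℕ → ℕ) (hspec : VWSP ν g) :
    ∀ᵐ p ∂(μ.prod ν),
      Tendsto (fun n : ℕ => (T2 n p.1 p.2 : ℝ) / n) atTop (nhds 1) := by
  classical
  haveI : MeasurableSingletonClass (Quotient (mSetoid χ)) := msc
  set F : (ℕ → χ) → (ℕ → Quotient (mSetoid χ)) := Fq with hFdef
  have hF : Measurable F := measurable_Fq
  set μ' := μ.map F with hμ'
  set ν' := ν.map F with hν'
  haveI : IsProbabilityMeasure μ' := Measure.isProbabilityMeasure_map hF.aemeasurable
  haveI : IsProbabilityMeasure ν' := Measure.isProbabilityMeasure_map hF.aemeasurable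
  obtain ⟨hh, hsmb⟩ := hent
  set η : ℝ := Real.exp (-(h / 2)) with hηdef
  have hη0 : 0 < η := Real.exp_pos _
  have hη1 : η < 1 := by
    rw [hηdef]
    calc Real.exp (-(h / 2)) < Real.exp 0 := Real.exp_lt_exp.mpr (by linarith)
      _ = 1 := Real.exp_zero
  set θ : ℝ≥0∞ := ENNReal.ofReal η with hθdef
  have hθ1 : θ < 1 := by
    rw [hθdef]
    exact ENNReal.ofReal_lt_one.mpr hη1
  -- deterministic upper bound: `n + g n` is in the defining set of `T2`
  have hub : ∀ (x y : ℕ → χ) (n : ℕ), 1 ≤ n →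
      (n + g n) ∈ {m | 1 ≤ m ∧ ∃ z : ℕ → χ,
        (∀ i < n, z i = y i) ∧ (∀ i < n, z (m + i) = x i)} := by
    intro x y n hn
    obtain ⟨z, hz1, hz2⟩ :=
      nonempty_of_measure_ne_zero (hspec.2 n (fun i => y (i : ℕ)) (fun i => x (i : ℕ))).ne'
    exact ⟨le_trans hn (Nat.le_add_right n _), z,
      fun i hi => hz1 ⟨i, hi⟩, fun i hi => hz2 ⟨i, hi⟩⟩
  -- the SMB consequence
  have hsmb' : ∀ᵐ x ∂μ, ∃ I : ℕ, ∀ i ≥ I,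
      μ' (cyl fun j : Fin i => F x (j : ℕ)) ≤ θ ^ i := by
    filter_upwards [hsmb] with x hx
    have hev : ∀ᶠ i : ℕ in atTop,
        h / 2 < -(1 / (i : ℝ)) * Real.log (μ (cyl fun j : Fin i => x (j : ℕ))).toReal ∧
          1 ≤ i :=
      (hx.eventually (eventually_gt_nhds (by linarith))).and (eventually_ge_atTop 1)
    obtain ⟨I, hI⟩ := eventually_atTop.mp hev
    refine ⟨I, fun i hi => ?_⟩
    obtain ⟨hgt, hi1⟩ := hI i hi
    have heq : μ' (cyl fun j : Fin i => F x (j : ℕ))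
        = μ (cyl fun j : Fin i => x (j : ℕ)) := map_cyl μ _
    rw [heq]
    set t := (μ (cyl fun j : Fin i => x (j : ℕ))).toReal with htdef
    have ht0 : 0 ≤ t := ENNReal.toReal_nonneg
    have hti : t ≤ η ^ i := by
      rcases eq_or_lt_of_le ht0 with h0 | h0
      · rw [← h0]; positivity
      · have hipos : (0:ℝ) < (i:ℝ) := by exact_mod_cast hi1
        have h2 : (i:ℝ) * (h / 2) < (i:ℝ) * (-(1 / (i:ℝ)) * Real.log t) :=
          mul_lt_mul_of_pos_left hgt hipos
        have h3 : (i:ℝ) * (-(1 / (i:ℝ)) * Real.log t) = - Real.log t := by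
          field_simp
        have hlog : Real.log t < -(h / 2) * (i:ℝ) := by nlinarith
        calc t = Real.exp (Real.log t) := (Real.exp_log h0).symm
          _ ≤ Real.exp (-(h / 2) * (i:ℝ)) := Real.exp_le_exp.mpr hlog.le
          _ = η ^ i := by
              rw [show (-(h / 2) * (i:ℝ)) = (i:ℝ) * (-(h / 2)) by ring,
                Real.exp_nat_mul, hηdef]
    rw [hθdef, ← ENNReal.ofReal_pow hη0.le]
    exact (ENNReal.le_ofReal_iff_toReal_le (measure_ne_top μ _) (by positivity)).mpr hti
  -- lift SMB to the product
  have hsmbP : ∀ᵐ p ∂(μ.prod ν), ∃ I : ℕ, ∀ i ≥ I,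
      μ' (cyl fun j : Fin i => F p.1 (j : ℕ)) ≤ θ ^ i := by
    have hNnull : μ {x : ℕ → χ | ¬ ∃ I : ℕ, ∀ i ≥ I,
        μ' (cyl fun j : Fin i => F x (j : ℕ)) ≤ θ ^ i} = 0 := ae_iff.mp hsmb'
    refine ae_iff.mpr ?_
    have hEq : {p : (ℕ → χ) × (ℕ → χ) | ¬ ∃ I : ℕ, ∀ i ≥ I,
          μ' (cyl fun j : Fin i => F p.1 (j : ℕ)) ≤ θ ^ i}
        = {x : ℕ → χ | ¬ ∃ I : ℕ, ∀ i ≥ I,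
            μ' (cyl fun j : Fin i => F x (j : ℕ)) ≤ θ ^ i} ×ˢ (Set.univ : Set (ℕ → χ)) := by
      ext p
      simp [Set.mem_prod]
    rw [hEq, Measure.prod_prod, hNnull, zero_mul]
  -- the lower bound, for each K ≥ 1
  have hlow : ∀ K : ℕ, 1 ≤ K → ∀ᵐ p ∂(μ.prod ν), ∀ᶠ n in atTop,
      n - (n / K + 1) < T2 n p.1 p.2 := by
    intro K hK
    obtain ⟨C, hCm, hC0, hCmem⟩ := lowerAux μ' ν' θ hθ1 K hK
    have hmap : (μ.prod ν).map (Prod.map F F) = μ'.prod ν' := by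
      rw [hμ', hν']
      exact (Measure.map_prod_map (f := F) (g := F) μ ν hF hF).symm
    have hpull : ∀ᵐ p ∂(μ.prod ν), (F p.1, F p.2) ∉ Filter.limsup C atTop := by
      have hnull : (μ.prod ν) ((Prod.map F F) ⁻¹' Filter.limsup C atTop) = 0 := by
        rw [← Measure.map_apply (hF.prodMap hF)
          (MeasurableSet.measurableSet_limsup hCm), hmap, hC0]
      refine ae_iff.mpr ?_
      have hEq : {p : (ℕ → χ) × (ℕ → χ) | ¬ (F p.1, F p.2) ∉ Filter.limsup C atTop}
          = (Prod.map F F) ⁻¹' Filter.limsup C atTop := by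
        ext p
        simp [Prod.map, not_not]
      rw [hEq]
      exact hnull
    filter_upwards [hpull, hsmbP] with p hCp hsp
    obtain ⟨I, hI⟩ := hsp
    have hev : ∀ᶠ n in atTop, (F p.1, F p.2) ∉ C n :=
      Filter.not_frequently.mp (mt Filter.mem_limsup_iff_frequently_mem.mpr hCp)
    filter_upwards [hev, eventually_ge_atTop (K * (I + 1)), eventually_ge_atTop 1]
      with n hCn hnI hn1
    have hIc : I + 1 ≤ n / K := by
      rw [Nat.le_div_iff_mul_le (show 0 < K by omega)]
      calc (I + 1) * K = K * (I + 1) := mul_comm _ _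
        _ ≤ n := hnI
    by_contra hle
    push_neg at hle
    set c := n / K + 1 with hcdef
    have hIc2 : I + 2 ≤ c := by omega
    have hmm : T2 n p.1 p.2 ∈ {m | 1 ≤ m ∧ ∃ z : ℕ → χ,
        (∀ i < n, z i = p.2 i) ∧ (∀ i < n, z (m + i) = p.1 i)} :=
      Nat.sInf_mem ⟨n + g n, hub p.1 p.2 n hn1⟩
    obtain ⟨hm1, z, hz1, hz2⟩ := hmm
    set m := T2 n p.1 p.2 with hm
    clear_value m
    clear hm hcdef
    have hcn : c ≤ n := by omega
    set i := n - m with hi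
    have hile : c ≤ i := by omega
    have hIle : I ≤ i := by omega
    have hover : ∀ j < i, (F p.2) (n - i + j) = (F p.1) j := by
      intro j hj
      have hnm : n - i = m := by omega
      rw [hnm]
      have h1 : z (m + j) = p.1 j := hz2 j (by omega)
      have h2 : z (m + j) = p.2 (m + j) := hz1 (m + j) (by omega)
      show Quotient.mk'' (p.2 (m + j)) = Quotient.mk'' (p.1 j)
      rw [← h2, h1]
    exact hCn (hCmem n i (F p.1, F p.2) hile (hI i hIle) hover)
  -- assemble
  have hae : ∀ᵐ p ∂(μ.prod ν), ∀ K : ℕ, ∀ᶠ n in atTop,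
      n - (n / (K + 1) + 1) < T2 n p.1 p.2 :=
    ae_all_iff.mpr fun K => hlow (K + 1) (Nat.le_add_left 1 K)
  filter_upwards [hae] with p hp
  refine tendsto_order.mpr ⟨fun a ha => ?_, fun a ha => ?_⟩
  · -- a < 1
    obtain ⟨K, hKgt⟩ := exists_nat_gt (2 / (1 - a))
    have h0 : (0:ℝ) < 1 - a := by linarith
    have hK1 : (0:ℝ) < (K:ℝ) + 1 := by positivity
    have h2K : 1 / ((K:ℝ) + 1) < 1 - a := by
      have hK0 : 2 / (1 - a) < (K:ℝ) + 1 := by linarith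
      have h2lt : 2 < (1 - a) * ((K:ℝ) + 1) := by
        have := (div_lt_iff₀ h0).mp hK0
        linarith
      rw [div_lt_iff₀ hK1]
      nlinarith
    filter_upwards [hp K, eventually_ge_atTop 1] with n hn hn1
    have hnR : (0:ℝ) < (n:ℝ) := by exact_mod_cast hn1
    have h1 : ((n - (n / (K + 1) + 1) : ℕ) : ℝ) + 1 ≤ (T2 n p.1 p.2 : ℝ) := by
      exact_mod_cast Nat.succ_le_of_lt hn
    have h2 : (n:ℝ) - ((n / (K + 1) : ℕ) : ℝ) - 1 ≤ ((n - (n / (K + 1) + 1) : ℕ) : ℝ) := by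
      rcases le_total (n / (K + 1) + 1) n with hcase | hcase
      · rw [Nat.cast_sub hcase]
        push_cast
        linarith
      · have hz : (n - (n / (K + 1) + 1) : ℕ) = 0 := Nat.sub_eq_zero_of_le hcase
        rw [hz]
        have : (n:ℝ) ≤ ((n / (K + 1) : ℕ) : ℝ) + 1 := by exact_mod_cast hcase
        push_cast
        linarith
    have h3 : ((n / (K + 1) : ℕ) : ℝ) ≤ (n:ℝ) / ((K:ℝ) + 1) := by
      have := Nat.cast_div_le (α := ℝ) (m := n) (n := K + 1)
      push_cast at this
      exact this
    have hT : (n:ℝ) - (n:ℝ) / ((K:ℝ) + 1) ≤ (T2 n p.1 p.2 : ℝ) := by linarith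
    rw [lt_div_iff₀ hnR]
    have hdiv : (n:ℝ) / ((K:ℝ) + 1) = (n:ℝ) * (1 / ((K:ℝ) + 1)) := by ring
    nlinarith [mul_lt_mul_of_pos_left h2K hnR]
  · -- 1 < a
    have hg : ∀ᶠ n in atTop, (g n : ℝ) / (n : ℝ) < a - 1 :=
      hspec.1.eventually (eventually_lt_nhds (by linarith))
    filter_upwards [hg, eventually_ge_atTop 1] with n hgn hn1
    have hnR : (0:ℝ) < (n:ℝ) := by exact_mod_cast hn1
    have hT : T2 n p.1 p.2 ≤ n + g n := Nat.sInf_le (hub p.1 p.2 n hn1)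
    have hTR : (T2 n p.1 p.2 : ℝ) ≤ (n:ℝ) + (g n : ℝ) := by exact_mod_cast hT
    have hdd : ((n:ℝ) + (g n : ℝ)) / (n:ℝ) = 1 + (g n : ℝ) / (n:ℝ) := by
      field_simp
    have hfin : (T2 n p.1 p.2 : ℝ) / (n:ℝ) ≤ ((n:ℝ) + (g n : ℝ)) / (n:ℝ) :=
      (div_le_div_iff_of_pos_right hnR).mpr hTR
    rw [hdd] at hfin
    linarith
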